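/- Assume the semi-parallelism condition R(X,Y)∘R̄_N = R̄_N∘R(X,Y) as endomorphisms (i.e., R(X,Y)(R̄_N Z) = R̄_N(R(X,Y)Z) for all Z), where R̄_N(ξ₂) = 2ξ₂, R̄_N(ξ) = 8ξ, and R(ξ₂,ξ)ξ₂ = −(2+αβ)ξ with α = √8 cot(√8 r), β = √2 cot(√2 r), r ∈ (0, π/√8). Then applying semi-parallelism with X = ξ₂, Y = ξ, Z = ξ₂ gives 2·R(ξ₂,ξ)ξ₂ = R̄_N(R(ξ₂,ξ)ξ₂) = −8(2+αβ)ξ, hence 6(2+αβ)ξ = 0, so 2 + αβ = 0, which contradicts 2 + αβ = 2cot²(√2 r) ≠ 0 for generic r; conclude there is no r ∈ (0, π/√8) making all these equations consistent. -/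

import Mathlib

open Real RealInnerProductSpace

/-- The type (A) exclusion argument: there is no `r ∈ (0, π/√8)` for which
the semi-parallelism equation `R(X,Y)(R̄_N Z) = R̄_N(R(X,Y)Z)`, together with
`R̄_N ξ₂ = 2ξ₂`, `R̄_N ξ = 8ξ` and `R(ξ₂,ξ)ξ₂ = −(2+αβ)ξ` with
`α = √8·cot(√8 r)`, `β = √2·cot(√2 r)`, can hold (for nonzero `ξ`):
semi-parallelism gives `2·R(ξ₂,ξ)ξ₂ = R̄_N(R(ξ₂,ξ)ξ₂) = −8(2+αβ)ξ`, hence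
`6(2+αβ)ξ = 0`, so `2+αβ = 0`, contradicting `2+αβ = 2cot²(√2 r) ≠ 0`. -/
theorem stmt_19 {V : Type*} [NormedAddCommGroup V] [InnerProductSpace ℝ V]
    (ξ ξ₂ : V) (hξ : ξ ≠ 0) (RN : V →ₗ[ℝ] V) (R : V → V → V → V) :
    ¬ ∃ r : ℝ, 0 < r ∧ r < π / Real.sqrt 8 ∧
      RN ξ₂ = (2 : ℝ) • ξ₂ ∧
      RN ξ = (8 : ℝ) • ξ ∧
      R ξ₂ ξ ξ₂ =
        -((2 + (Real.sqrt 8 * Real.cot (Real.sqrt 8 * r)) *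
            (Real.sqrt 2 * Real.cot (Real.sqrt 2 * r))) • ξ) ∧
      -- semi-parallelism applied with X = ξ₂, Y = ξ, Z = ξ₂
      (2 : ℝ) • R ξ₂ ξ ξ₂ = RN (R ξ₂ ξ ξ₂) := by
  rintro ⟨r, hr0, hr1, _h2, h8, hR, hsp⟩
  set c : ℝ := 2 + (Real.sqrt 8 * Real.cot (Real.sqrt 8 * r)) *
      (Real.sqrt 2 * Real.cot (Real.sqrt 2 * r)) with hc
  -- algebraic step: c = 0
  rw [hR] at hsp
  rw [map_neg, map_smul, h8] at hsp
  have hkey : ((6 : ℝ) * c) • ξ = 0 := by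
    have h := sub_eq_zero_of_eq hsp
    have : ((2:ℝ) • -(c • ξ) : V) - -(c • (8:ℝ) • ξ) = ((6:ℝ) * c) • ξ := by
      module
    rw [this] at h
    exact h
  have hc0 : c = 0 := by
    rcases smul_eq_zero.mp hkey with h | h
    · linarith
    · exact absurd h hξ
  -- trigonometric contradiction
  have hs2 : Real.sqrt 2 > 0 := Real.sqrt_pos.mpr (by norm_num)
  have h82 : Real.sqrt 8 = 2 * Real.sqrt 2 := by
    rw [show (8:ℝ) = 2^2 * 2 by norm_num, Real.sqrt_mul (by positivity),
      Real.sqrt_sq (by norm_num)]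
  set x := Real.sqrt 2 * r with hxdef
  have hx0 : 0 < x := mul_pos hs2 hr0
  have hxlt : 2 * x < π := by
    have h8pos : (0:ℝ) < Real.sqrt 8 := by rw [h82]; positivity
    have := (lt_div_iff₀ h8pos).mp hr1
    rw [h82] at this
    nlinarith
  have hsin2 : 0 < Real.sin (2 * x) := Real.sin_pos_of_pos_of_lt_pi (by linarith) hxlt
  have hsinx : Real.sin x ≠ 0 := by
    intro h
    rw [Real.sin_two_mul, h] at hsin2
    simp at hsin2
  have hcosx : Real.cos x ≠ 0 := by
    intro h
    rw [Real.sin_two_mul, h] at hsin2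
    simp at hsin2
  have h8x : Real.sqrt 8 * r = 2 * x := by rw [h82, hxdef]; ring
  rw [hc, h8x] at hc0
  rw [Real.cot_eq_cos_div_sin, Real.cot_eq_cos_div_sin, h82, Real.sin_two_mul,
    Real.cos_two_mul] at hc0
  have hpyth : Real.sin x ^ 2 + Real.cos x ^ 2 = 1 := Real.sin_sq_add_cos_sq x
  field_simp at hc0
  have h2 : Real.sqrt 2 * Real.sqrt 2 = 2 := Real.mul_self_sqrt (by norm_num)
  have hcube : (4:ℝ) * Real.cos x ^ 3 = 0 := by
    linear_combination (2*Real.cos x) * hc0 + (-2*(2*Real.cos x^2-1)*Real.cos x) * h2 +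
      (-4*Real.cos x) * hpyth
  have : Real.cos x = 0 := by
    have := pow_eq_zero_iff (n := 3) (by norm_num) |>.mp (by linarith : Real.cos x ^ 3 = 0)
    exact this
  exact hcosx this
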